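/- Let g : {1,2,...} → ℝ be a function with g(1) = 1 and g(n) > 0 for all n. Then the family {P_n^{g̃,1}(x)}_n is vertically log-concave if and only if the family {P_n^{g,id}(x)}_n is vertically log-concave; that is, for every fixed m ≥ 1 the sequence n ↦ A_{n,m}^{g̃,1} is log-concave if and only if for every fixed m ≥ 1 the sequence n ↦ A_{n,m}^{g,id} is log-concave. -/

import Mathlib

/-- The polynomials `P_n^{g,h}` defined by `P_0 = 1` and
`P_n(x) = (x / h(n)) * ∑_{k=1}^n g(k) P_{n-k}(x)` for `n ≥ 1`. -/
noncomputable def HVP (g h : ℕ → ℝ) : ℕ → Polynomial ℝ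
  | 0 => 1
  | (n + 1) =>
      Polynomial.C (h (n + 1))⁻¹ * Polynomial.X *
        ∑ k ∈ (Finset.Icc 1 (n + 1)).attach, Polynomial.C (g k.1) * HVP g h (n + 1 - k.1)
  decreasing_by
    have := (Finset.mem_Icc.mp k.2).1
    omega

/-- `A_{n,m}^{g,h}`, the coefficient of `x^m` in `P_n^{g,h}(x)`.
(It vanishes automatically unless `1 ≤ m ≤ n`, except `A_{0,0} = 1`.) -/
noncomputable def HVA (g h : ℕ → ℝ) (n m : ℕ) : ℝ := (HVP g h n).coeff m

lemma HVP_succ (g h : ℕ → ℝ) (n : ℕ) :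
    HVP g h (n+1) = Polynomial.C (h (n+1))⁻¹ * Polynomial.X *
      ∑ k ∈ Finset.Icc 1 (n+1), Polynomial.C (g k) * HVP g h (n+1-k) := by
  rw [HVP]
  congr 1
  exact Finset.sum_attach _ fun k => Polynomial.C (g k) * HVP g h (n+1-k)

lemma HVA_succ (g h : ℕ → ℝ) (n m : ℕ) :
    HVA g h (n+1) (m+1) = (h (n+1))⁻¹ * ∑ k ∈ Finset.Icc 1 (n+1), g k * HVA g h (n+1-k) m := by
  unfold HVA
  rw [HVP_succ, mul_assoc, Polynomial.coeff_C_mul, Polynomial.coeff_X_mul,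
    Polynomial.finset_sum_coeff]
  simp [Polynomial.coeff_C_mul]

lemma HVA_coeff_zero (g h : ℕ → ℝ) (n : ℕ) : HVA g h (n+1) 0 = 0 := by
  unfold HVA
  rw [HVP_succ]
  simp [Polynomial.mul_coeff_zero]

lemma HVA_zero (g h : ℕ → ℝ) (m : ℕ) : HVA g h 0 m = if m = 0 then 1 else 0 := by
  unfold HVA
  rw [HVP]
  simp [Polynomial.coeff_one, eq_comm]

open PowerSeries in
noncomputable def Gs (g : ℕ → ℝ) : PowerSeries ℝ := PowerSeries.mk fun k => g k / k

lemma coeff_Gs (g : ℕ → ℝ) (k : ℕ) : PowerSeries.coeff k (Gs g) = g k / k :=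
  PowerSeries.coeff_mk _ _

lemma coeff_Gs_zero (g : ℕ → ℝ) : PowerSeries.coeff 0 (Gs g) = 0 := by
  simp [coeff_Gs]

lemma hva_eq_coeff_pow (g : ℕ → ℝ) : ∀ n m : ℕ,
    HVA (fun k => g k / (k : ℝ)) (fun _ => 1) n m = PowerSeries.coeff n (Gs g ^ m) := by
  intro n
  induction n using Nat.strong_induction_on with
  | _ n ih =>
    intro m
    match n, m with
    | 0, 0 => simp [HVA_zero]
    | 0, m+1 =>
        rw [HVA_zero]
        simp [PowerSeries.coeff_zero_eq_constantCoeff, map_pow]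
        simp [Gs, PowerSeries.constantCoeff_mk]
    | n+1, 0 =>
        rw [HVA_coeff_zero]
        simp [PowerSeries.coeff_one]
    | n+1, m+1 =>
        rw [HVA_succ, pow_succ', PowerSeries.coeff_mul,
          Finset.Nat.sum_antidiagonal_eq_sum_range_succ_mk,
          Finset.sum_range_succ', inv_one, one_mul, ← Finset.Ico_add_one_right_eq_Icc, Finset.sum_Ico_eq_sum_range]
        simp only [coeff_Gs_zero, zero_mul, add_zero]
        refine Finset.sum_congr (by norm_num) fun i hi => ?_
        simp only [add_comm 1 i]
        rw [coeff_Gs, ih (n+1-(i+1)) (by omega) m]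

open PowerSeries in
lemma coeff_deriv_Gs (g : ℕ → ℝ) (j : ℕ) :
    PowerSeries.coeff j (d⁄dX ℝ (Gs g)) = g (j+1) := by
  rw [PowerSeries.coeff_derivative, coeff_Gs]
  field_simp
  push_cast; ring

open PowerSeries in
lemma euler_id (g : ℕ → ℝ) (n m : ℕ) :
    (n : ℝ) * PowerSeries.coeff n (Gs g ^ (m+1)) =
      (m+1 : ℝ) * ∑ k ∈ Finset.Icc 1 n, g k * PowerSeries.coeff (n-k) (Gs g ^ m) := by
  cases n with
  | zero => simp
  | succ n =>
      have h1 : ((n:ℝ)+1) * PowerSeries.coeff (n+1) (Gs g ^ (m+1)) =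
          PowerSeries.coeff n (d⁄dX ℝ (Gs g ^ (m+1))) := by
        rw [PowerSeries.coeff_derivative]; ring
      push_cast
      rw [h1, Derivation.leibniz_pow, smul_eq_mul, map_nsmul, nsmul_eq_mul,
        PowerSeries.coeff_mul, Finset.Nat.sum_antidiagonal_eq_sum_range_succ_mk]
      push_cast
      congr 1
      rw [← Finset.Ico_add_one_right_eq_Icc, Finset.sum_Ico_eq_sum_range, ← Finset.sum_range_reflect]
      refine Finset.sum_congr (by norm_num) fun j hj => ?_
      simp only [Finset.mem_range] at hj
      rw [show n.succ - 1 - j = n - j from by omega,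
        show n - (n - j) = j from by omega, coeff_deriv_Gs,
        show 1 + j = j + 1 from by omega,
        show n + 1 - (j + 1) = n - j from by omega]
      ring

lemma hva_id_eq (g : ℕ → ℝ) : ∀ n m : ℕ,
    HVA g (fun k => (k : ℝ)) n m = PowerSeries.coeff n (Gs g ^ m) / (Nat.factorial m : ℝ) := by
  intro n
  induction n using Nat.strong_induction_on with
  | _ n ih =>
    intro m
    match n, m with
    | 0, 0 => simp [HVA_zero]
    | 0, m+1 =>
        rw [HVA_zero]
        simp [PowerSeries.coeff_zero_eq_constantCoeff, map_pow]
        simp [Gs, PowerSeries.constantCoeff_mk]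
    | n+1, 0 =>
        rw [HVA_coeff_zero]
        simp [PowerSeries.coeff_one]
    | n+1, m+1 =>
        rw [HVA_succ]
        have hsum : ∑ k ∈ Finset.Icc 1 (n+1), g k * HVA g (fun k => (k : ℝ)) (n+1-k) m
            = (∑ k ∈ Finset.Icc 1 (n+1),
                g k * PowerSeries.coeff (n+1-k) (Gs g ^ m)) / (Nat.factorial m : ℝ) := by
          rw [Finset.sum_div]
          refine Finset.sum_congr rfl fun k hk => ?_
          have hk1 := (Finset.mem_Icc.mp hk).1
          rw [ih (n+1-k) (by omega) m, mul_div_assoc]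
        rw [hsum]
        have he := euler_id g (n+1) m
        have hm : ((Nat.factorial (m+1) : ℕ) : ℝ) = ((m:ℝ)+1) * (Nat.factorial m : ℝ) := by
          push_cast [Nat.factorial_succ]; ring
        have h1 : ((n:ℝ)+1) ≠ 0 := by positivity
        have h2 : ((m:ℝ)+1) ≠ 0 := by positivity
        have h3 : ((Nat.factorial m : ℕ) : ℝ) ≠ 0 := by positivity
        push_cast at he ⊢
        rw [hm]
        field_simp
        linear_combination (-1 : ℝ) * he

/-- `{P_n^{g̃,1}}_n` is vertically log-concave iff `{P_n^{g,id}}_n` is vertically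
log-concave: for every fixed `m ≥ 1` the sequence `n ↦ A_{n,m}` is log-concave. -/
theorem vertical_logConcave_iff (g : ℕ → ℝ) (hg1 : g 1 = 1)
    (hgpos : ∀ k, 1 ≤ k → 0 < g k) :
    (∀ m, 1 ≤ m → ∀ n, 1 ≤ n →
        HVA (fun k => g k / (k : ℝ)) (fun _ => 1) n m ^ 2 ≥
          HVA (fun k => g k / (k : ℝ)) (fun _ => 1) (n - 1) m *
            HVA (fun k => g k / (k : ℝ)) (fun _ => 1) (n + 1) m)
      ↔ (∀ m, 1 ≤ m → ∀ n, 1 ≤ n →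
          HVA g (fun k => (k : ℝ)) n m ^ 2 ≥
            HVA g (fun k => (k : ℝ)) (n - 1) m * HVA g (fun k => (k : ℝ)) (n + 1) m) := by
  have key : ∀ n m : ℕ, HVA g (fun k => (k : ℝ)) n m
      = HVA (fun k => g k / (k : ℝ)) (fun _ => 1) n m / (Nat.factorial m : ℝ) := by
    intro n m
    rw [hva_id_eq, hva_eq_coeff_pow]
  constructor
  · intro H m hm n hn
    have h := H m hm n hn
    have hc : (0:ℝ) < ((Nat.factorial m : ℝ))^2 := by positivity
    rw [key, key, key, ge_iff_le, div_mul_div_comm, div_pow, ← sq, div_le_div_iff_of_pos_right hc]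
    exact h
  · intro H m hm n hn
    have h := H m hm n hn
    have hc : (0:ℝ) < ((Nat.factorial m : ℝ))^2 := by positivity
    rw [key, key, key, ge_iff_le, div_mul_div_comm, div_pow, ← sq, div_le_div_iff_of_pos_right hc] at h
    exact h
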